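/- arXiv:1704.01545 — 5 statements merged into one kernel-verified Lean document; each statement's English description precedes it below -/
import Mathlib

section
/- Let V(η, ω) = ½ ωᵀJω − ω_s⁻¹ 𝟙ᵀΓ cos η, with J = diag(J_i), J_i > 0, Γ = diag(γ_k), γ_k > 0, ω_s > 0, and let η_s ∈ (−π/2, π/2)^m. Then the Hessian of V at (η_s, 𝟙ω_s) is positive definite, and hence the Bregman-shifted function V_s(x) = V(x) − (x − x̄)ᵀ∇V(x̄) − V(x̄), with x̄ = (η_s, 𝟙ω_s), has a strict local minimum value 0 at x̄ and is positive in a punctured neighborhood of x̄. -/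
open Real in
lemma stmt5_tangent {η θ : ℝ} (hη : η ∈ Set.Ioo (-(π / 2)) (π / 2))
    (hθ : θ ∈ Set.Ioo (-(π / 2)) (π / 2)) (hne : θ ≠ η) :
    0 < Real.cos η - Real.cos θ - (θ - η) * Real.sin η := by
  set g : ℝ → ℝ := fun t => Real.cos η - Real.cos t - (t - η) * Real.sin η with hg
  have hderiv : ∀ t, HasDerivAt g (Real.sin t - Real.sin η) t := by
    intro t
    have h1 : HasDerivAt (fun t : ℝ => Real.cos η - Real.cos t) (0 - (-Real.sin t)) t :=
      (hasDerivAt_const t (Real.cos η)).sub (Real.hasDerivAt_cos t)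
    have h2 : HasDerivAt (fun t : ℝ => (t - η) * Real.sin η) (1 * Real.sin η) t :=
      ((hasDerivAt_id t).sub_const η).mul_const (Real.sin η)
    simpa using h1.fun_sub h2
  have hcont : Continuous g := continuous_iff_continuousAt.2 fun t => (hderiv t).continuousAt
  have hg0 : g η = 0 := by simp [hg]
  rcases lt_or_gt_of_ne hne with hlt | hgt
  · have hanti : StrictAntiOn g (Set.Icc θ η) := by
      apply strictAntiOn_of_deriv_neg (convex_Icc _ _) hcont.continuousOn
      intro t ht
      rw [interior_Icc] at ht
      rw [(hderiv t).deriv]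
      have : Real.sin t < Real.sin η :=
        Real.strictMonoOn_sin ⟨by linarith [hθ.1, ht.1], by linarith [hη.2, ht.2]⟩
          ⟨hη.1.le, hη.2.le⟩ ht.2
      linarith
    have := hanti ⟨le_refl θ, hlt.le⟩ ⟨hlt.le, le_refl η⟩ hlt
    rw [hg0] at this
    simpa [hg] using this
  · have hmono : StrictMonoOn g (Set.Icc η θ) := by
      apply strictMonoOn_of_deriv_pos (convex_Icc _ _) hcont.continuousOn
      intro t ht
      rw [interior_Icc] at ht
      rw [(hderiv t).deriv]
      have : Real.sin η < Real.sin t :=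
        Real.strictMonoOn_sin ⟨hη.1.le, hη.2.le⟩
          ⟨by linarith [hη.1, ht.1], by linarith [hθ.2, ht.2]⟩ ht.1
      linarith
    have := hmono ⟨le_refl η, hgt.le⟩ ⟨hgt.le, le_refl θ⟩ hgt
    rw [hg0] at this
    simpa [hg] using this

open Real in
/-- For V(η, ω) = ½ωᵀJω − ω_s⁻¹𝟙ᵀΓ cos η with η_s ∈ (−π/2, π/2)^m,
the Hessian of V at x̄ = (η_s, 𝟙ω_s) is positive definite, and the Bregman shift
V_s(x) = V(x) − (x − x̄)ᵀ∇V(x̄) − V(x̄) has a strict local minimum value 0 at x̄,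
positive in a punctured neighborhood of x̄. -/
theorem stmt5 {n m : ℕ} (J : Fin n → ℝ) (hJ : ∀ i, 0 < J i)
    (γ : Fin m → ℝ) (hγ : ∀ k, 0 < γ k)
    (ωs : ℝ) (hωs : 0 < ωs)
    (ηs : Fin m → ℝ) (hηs : ∀ k, ηs k ∈ Set.Ioo (-(π / 2)) (π / 2))
    (V : ((Fin m ⊕ Fin n) → ℝ) → ℝ)
    (hV : ∀ x, V x = (1 / 2) * ∑ i, J i * (x (Sum.inr i)) ^ 2
        - ωs⁻¹ * ∑ k, γ k * Real.cos (x (Sum.inl k)))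
    (xbar : (Fin m ⊕ Fin n) → ℝ)
    (hxbar : xbar = Sum.elim ηs (fun _ => ωs))
    (Vs : ((Fin m ⊕ Fin n) → ℝ) → ℝ)
    (hVs : ∀ x, Vs x =
      V x - (∑ a, (x a - xbar a) * fderiv ℝ V xbar (Pi.single a 1)) - V xbar) :
    (Matrix.of fun a b =>
        fderiv ℝ (fun x => fderiv ℝ V x (Pi.single b 1)) xbar (Pi.single a 1)).PosDef ∧
    Vs xbar = 0 ∧ ∀ᶠ x in nhdsWithin xbar {xbar}ᶜ, 0 < Vs x := by
  have hVfun : V = fun x => (1 / 2) * ∑ i, J i * (x (Sum.inr i)) ^ 2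
      - ωs⁻¹ * ∑ k, γ k * Real.cos (x (Sum.inl k)) := funext hV
  subst hVfun
  subst hxbar
  set xb : (Fin m ⊕ Fin n) → ℝ := Sum.elim ηs (fun _ => ωs) with hxb
  have hp : ∀ (a : Fin m ⊕ Fin n) (x : (Fin m ⊕ Fin n) → ℝ),
      HasFDerivAt (fun y : (Fin m ⊕ Fin n) → ℝ => y a)
        (ContinuousLinearMap.proj (R := ℝ) (φ := fun _ : Fin m ⊕ Fin n => ℝ) a) x :=
    fun a x => by
      have h := (ContinuousLinearMap.proj (R := ℝ)
        (φ := fun _ : Fin m ⊕ Fin n => ℝ) a).hasFDerivAt (x := x)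
      exact h
  have hFd : ∀ x : (Fin m ⊕ Fin n) → ℝ, HasFDerivAt
      (fun x => (1 / 2) * ∑ i, J i * (x (Sum.inr i)) ^ 2
        - ωs⁻¹ * ∑ k, γ k * Real.cos (x (Sum.inl k)))
      ((1/2 : ℝ) • (∑ i : Fin n, (J i) •
          ((x (Sum.inr i)) • (ContinuousLinearMap.proj (R := ℝ)
              (φ := fun _ : Fin m ⊕ Fin n => ℝ) (Sum.inr i))
            + (x (Sum.inr i)) • (ContinuousLinearMap.proj (Sum.inr i))))
        - (ωs⁻¹) • (∑ k : Fin m, (γ k) •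
          ((-Real.sin (x (Sum.inl k))) • (ContinuousLinearMap.proj (Sum.inl k))))) x := by
    intro x
    simp only [pow_two]
    apply HasFDerivAt.sub
    · exact (HasFDerivAt.fun_sum fun i _ =>
        ((hp (Sum.inr i) x).mul (hp (Sum.inr i) x)).const_mul (J i)).const_mul (1/2)
    · exact (HasFDerivAt.fun_sum fun k _ =>
        (((Real.hasDerivAt_cos (x (Sum.inl k))).comp_hasFDerivAt x
          (hp (Sum.inl k) x)).const_mul (γ k))).const_mul ωs⁻¹
  have key : ∀ (x v : (Fin m ⊕ Fin n) → ℝ), fderiv ℝ (fun x => (1 / 2) * ∑ i, J i * (x (Sum.inr i)) ^ 2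
        - ωs⁻¹ * ∑ k, γ k * Real.cos (x (Sum.inl k))) x v
      = ∑ i, J i * x (Sum.inr i) * v (Sum.inr i)
        + ωs⁻¹ * ∑ k, γ k * Real.sin (x (Sum.inl k)) * v (Sum.inl k) := by
    intro x v
    rw [(hFd x).fderiv]
    simp only [ContinuousLinearMap.sub_apply, ContinuousLinearMap.smul_apply,
      ContinuousLinearMap.sum_apply, ContinuousLinearMap.add_apply,
      ContinuousLinearMap.proj_apply, smul_eq_mul]
    rw [sub_eq_add_neg, ← mul_neg, ← Finset.sum_neg_distrib, Finset.mul_sum, Finset.mul_sum,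
      Finset.mul_sum]
    congr 1 <;> exact Finset.sum_congr rfl fun _ _ => by ring
  have hgrad : ∀ (a : Fin m ⊕ Fin n), fderiv ℝ (fun x => (1 / 2) * ∑ i, J i * (x (Sum.inr i)) ^ 2
        - ωs⁻¹ * ∑ k, γ k * Real.cos (x (Sum.inl k))) xb (Pi.single a 1)
      = Sum.elim (fun k => ωs⁻¹ * (γ k * Real.sin (ηs k))) (fun i => J i * ωs) a := by
    intro a
    rw [key]
    cases a with
    | inl k => simp [Pi.single_apply, hxb, Finset.mul_sum]
    | inr i => simp [Pi.single_apply, hxb, Finset.mul_sum]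
  constructor
  · -- Hessian positive definite
    have hmat : (Matrix.of fun a b =>
        fderiv ℝ (fun x => fderiv ℝ (fun x => (1 / 2) * ∑ i, J i * (x (Sum.inr i)) ^ 2
          - ωs⁻¹ * ∑ k, γ k * Real.cos (x (Sum.inl k))) x (Pi.single b 1)) xb (Pi.single a 1))
        = Matrix.diagonal (Sum.elim (fun k => ωs⁻¹ * (γ k * Real.cos (ηs k))) J) := by
      ext a b
      rw [Matrix.of_apply, Matrix.diagonal_apply]
      cases b with
      | inl k =>
        have h1 : (fun x : (Fin m ⊕ Fin n) → ℝ =>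
            fderiv ℝ (fun x => (1 / 2) * ∑ i, J i * (x (Sum.inr i)) ^ 2
              - ωs⁻¹ * ∑ k, γ k * Real.cos (x (Sum.inl k))) x (Pi.single (Sum.inl k) 1))
            = fun x => ωs⁻¹ * (γ k * Real.sin (x (Sum.inl k))) := by
          funext x
          rw [key]
          simp [Pi.single_apply]
        rw [h1]
        have hd : HasFDerivAt (fun x : (Fin m ⊕ Fin n) → ℝ =>
            ωs⁻¹ * (γ k * Real.sin (x (Sum.inl k))))
            (ωs⁻¹ • ((γ k) • ((Real.cos (xb (Sum.inl k))) •
              (ContinuousLinearMap.proj (R := ℝ)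
                (φ := fun _ : Fin m ⊕ Fin n => ℝ) (Sum.inl k))))) xb :=
          by have h := (((Real.hasDerivAt_sin (xb (Sum.inl k))).comp_hasFDerivAt xb
               (hp (Sum.inl k) xb)).const_mul (γ k)).const_mul ωs⁻¹
             exact h
        rw [hd.fderiv]
        rcases eq_or_ne a (Sum.inl k) with h | h
        · subst h; simp [hxb]
        · simp [Pi.single_apply, h, hxb, Ne.symm h]
      | inr i =>
        have h1 : (fun x : (Fin m ⊕ Fin n) → ℝ =>
            fderiv ℝ (fun x => (1 / 2) * ∑ i, J i * (x (Sum.inr i)) ^ 2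
              - ωs⁻¹ * ∑ k, γ k * Real.cos (x (Sum.inl k))) x (Pi.single (Sum.inr i) 1))
            = fun x => J i * x (Sum.inr i) := by
          funext x
          rw [key]
          simp [Pi.single_apply, Finset.mul_sum]
        rw [h1]
        have hd : HasFDerivAt (fun x : (Fin m ⊕ Fin n) → ℝ => J i * x (Sum.inr i))
            ((J i) • (ContinuousLinearMap.proj (R := ℝ)
              (φ := fun _ : Fin m ⊕ Fin n => ℝ) (Sum.inr i))) xb :=
          (hp (Sum.inr i) xb).const_mul (J i)
        rw [hd.fderiv]
        rcases eq_or_ne a (Sum.inr i) with h | h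
        · subst h; simp
        · simp [Pi.single_apply, h, Ne.symm h]
    rw [hmat]
    refine Matrix.posDef_diagonal_iff.2 ?_
    rintro (k | i)
    · have := Real.cos_pos_of_mem_Ioo (hηs k)
      simp only [Sum.elim_inl]
      exact mul_pos (inv_pos.2 hωs) (mul_pos (hγ k) this)
    · simpa using hJ i
  constructor
  · rw [hVs]; simp
  · -- positivity near xbar
    have hVs' : ∀ x, Vs x = (∑ i, (J i / 2) * (x (Sum.inr i) - ωs) ^ 2)
        + ωs⁻¹ * ∑ k, γ k * (Real.cos (ηs k) - Real.cos (x (Sum.inl k))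
          - (x (Sum.inl k) - ηs k) * Real.sin (ηs k)) := by
      intro x
      rw [hVs, Fintype.sum_sum_type]
      simp only [hgrad]
      simp only [Sum.elim_inl, Sum.elim_inr, hxb]
      have S1 : ∑ i, (J i / 2) * (x (Sum.inr i) - ωs) ^ 2
          = (1/2) * ∑ i, J i * (x (Sum.inr i))^2
            - (∑ i, (x (Sum.inr i) - ωs) * (J i * ωs))
            - (1/2) * ∑ i, J i * ωs^2 := by
        rw [Finset.mul_sum, Finset.mul_sum, ← Finset.sum_sub_distrib, ← Finset.sum_sub_distrib]
        exact Finset.sum_congr rfl fun i _ => by ring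
      have S2 : ωs⁻¹ * ∑ k, γ k * (Real.cos (ηs k) - Real.cos (x (Sum.inl k))
            - (x (Sum.inl k) - ηs k) * Real.sin (ηs k))
          = ωs⁻¹ * ∑ k, γ k * Real.cos (ηs k)
            - ωs⁻¹ * ∑ k, γ k * Real.cos (x (Sum.inl k))
            - ∑ k, (x (Sum.inl k) - ηs k) * (ωs⁻¹ * (γ k * Real.sin (ηs k))) := by
        rw [Finset.mul_sum, Finset.mul_sum, Finset.mul_sum, ← Finset.sum_sub_distrib,
          ← Finset.sum_sub_distrib]
        exact Finset.sum_congr rfl fun k _ => by ring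
      rw [S1, S2]
      ring
    have hU : IsOpen {x : (Fin m ⊕ Fin n) → ℝ |
        ∀ k, x (Sum.inl k) ∈ Set.Ioo (-(π / 2)) (π / 2)} := by
      have : {x : (Fin m ⊕ Fin n) → ℝ | ∀ k, x (Sum.inl k) ∈ Set.Ioo (-(π / 2)) (π / 2)}
          = ⋂ k, (fun x : (Fin m ⊕ Fin n) → ℝ => x (Sum.inl k)) ⁻¹'
              Set.Ioo (-(π / 2)) (π / 2) := by
        ext x; simp [Set.mem_iInter]
      rw [this]
      exact isOpen_iInter_of_finite fun k =>
        isOpen_Ioo.preimage (continuous_apply (Sum.inl k))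
    have hUmem : xb ∈ {x : (Fin m ⊕ Fin n) → ℝ |
        ∀ k, x (Sum.inl k) ∈ Set.Ioo (-(π / 2)) (π / 2)} := fun k => by
      simpa [hxb] using hηs k
    have h1 : {x : (Fin m ⊕ Fin n) → ℝ | ∀ k, x (Sum.inl k) ∈ Set.Ioo (-(π / 2)) (π / 2)}
        ∈ nhdsWithin xb {xb}ᶜ := mem_nhdsWithin_of_mem_nhds (hU.mem_nhds hUmem)
    filter_upwards [h1, self_mem_nhdsWithin] with x hxU hxne
    have hxne' : x ≠ xb := hxne
    rw [hVs' x]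
    have hterm1 : ∀ i ∈ Finset.univ, (0:ℝ) ≤ (J i / 2) * (x (Sum.inr i) - ωs) ^ 2 :=
      fun i _ => mul_nonneg (by linarith [hJ i]) (sq_nonneg _)
    have hterm2 : ∀ k ∈ Finset.univ, (0:ℝ) ≤ γ k * (Real.cos (ηs k) - Real.cos (x (Sum.inl k))
        - (x (Sum.inl k) - ηs k) * Real.sin (ηs k)) := by
      intro k _
      rcases eq_or_ne (x (Sum.inl k)) (ηs k) with h | h
      · simp [h]
      · exact mul_nonneg (hγ k).le (stmt5_tangent (hηs k) (hxU k) h).le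
    obtain ⟨a, ha⟩ := Function.ne_iff.mp hxne'
    cases a with
    | inl k =>
      have hk : x (Sum.inl k) ≠ ηs k := by simpa [hxb] using ha
      have hpos : 0 < ωs⁻¹ * ∑ k, γ k * (Real.cos (ηs k) - Real.cos (x (Sum.inl k))
          - (x (Sum.inl k) - ηs k) * Real.sin (ηs k)) := by
        refine mul_pos (inv_pos.2 hωs) (Finset.sum_pos' hterm2 ⟨k, Finset.mem_univ k, ?_⟩)
        exact mul_pos (hγ k) (stmt5_tangent (hηs k) (hxU k) hk)
      have hnn : 0 ≤ ∑ i, (J i / 2) * (x (Sum.inr i) - ωs) ^ 2 :=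
        Finset.sum_nonneg hterm1
      linarith
    | inr i =>
      have hi : x (Sum.inr i) ≠ ωs := by simpa [hxb] using ha
      have hpos : 0 < ∑ i, (J i / 2) * (x (Sum.inr i) - ωs) ^ 2 := by
        refine Finset.sum_pos' hterm1 ⟨i, Finset.mem_univ i, ?_⟩
        have h2 : (0:ℝ) < (x (Sum.inr i) - ωs) ^ 2 :=
          lt_of_le_of_ne (sq_nonneg _) (Ne.symm (pow_ne_zero 2 (sub_ne_zero.mpr hi)))
        exact mul_pos (by linarith [hJ i]) h2
      have hnn : 0 ≤ ωs⁻¹ * ∑ k, γ k * (Real.cos (ηs k) - Real.cos (x (Sum.inl k))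
          - (x (Sum.inl k) - ηs k) * Real.sin (ηs k)) :=
        mul_nonneg (inv_pos.2 hωs).le (Finset.sum_nonneg hterm2)
      linarith
end

section
/- Let B ∈ ℝ^{n×m} be the incidence matrix of a connected graph, Γ = diag(γ_k) with γ_k > 0, and η, η_s ∈ im Bᵀ ∩ (−π/2, π/2)^m. If BΓ(sin η − sin η_s) = 0, then η = η_s. -/
open Real in
/-- If B is the incidence matrix of a connected graph, Γ = diag(γ) > 0,
η, η_s ∈ im Bᵀ ∩ (−π/2, π/2)^m, and BΓ(sin η − sin η_s) = 0, then η = η_s. -/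
theorem stmt7 {n m : ℕ} (E : Fin m → Fin n × Fin n)
    (hloop : ∀ e, (E e).1 ≠ (E e).2)
    (G : SimpleGraph (Fin n))
    (hGadj : ∀ i j, G.Adj i j ↔ i ≠ j ∧ ∃ e, E e = (i, j) ∨ E e = (j, i))
    (hconn : G.Connected)
    (B : Matrix (Fin n) (Fin m) ℝ)
    (hBdef : ∀ i e, B i e =
      if i = (E e).1 then 1 else if i = (E e).2 then -1 else 0)
    (γ : Fin m → ℝ) (hγ : ∀ k, 0 < γ k)
    (η ηs : Fin m → ℝ)
    (hη : η ∈ Set.range B.transpose.mulVec)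
    (hηs : ηs ∈ Set.range B.transpose.mulVec)
    (hηbox : ∀ k, η k ∈ Set.Ioo (-(π / 2)) (π / 2))
    (hηsbox : ∀ k, ηs k ∈ Set.Ioo (-(π / 2)) (π / 2))
    (hzero : B.mulVec (fun k => γ k * (Real.sin (η k) - Real.sin (ηs k))) = 0) :
    η = ηs := by
  obtain ⟨θ, hθ⟩ := hη
  obtain ⟨θs, hθs⟩ := hηs
  set v : Fin m → ℝ := fun k => γ k * (Real.sin (η k) - Real.sin (ηs k)) with hv
  have key : dotProduct (η - ηs) v = 0 := by
    have h1 : η - ηs = B.transpose.mulVec (θ - θs) := by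
      rw [Matrix.mulVec_sub, hθ, hθs]
    rw [h1, Matrix.mulVec_transpose, ← Matrix.dotProduct_mulVec, hzero,
      dotProduct_zero]
  have hterm : ∀ k, 0 ≤ (η - ηs) k * v k := by
    intro k
    have hmono := Real.strictMonoOn_sin
    have hk1 := hηbox k
    have hk2 := hηsbox k
    have hmem1 : η k ∈ Set.Icc (-(π/2)) (π/2) := ⟨le_of_lt hk1.1, le_of_lt hk1.2⟩
    have hmem2 : ηs k ∈ Set.Icc (-(π/2)) (π/2) := ⟨le_of_lt hk2.1, le_of_lt hk2.2⟩
    rcases lt_trichotomy (η k) (ηs k) with h | h | h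
    · have := hmono hmem1 hmem2 h
      have : (η - ηs) k ≤ 0 := by simp [sub_nonpos, h.le]
      have hv0 : v k ≤ 0 := by
        apply mul_nonpos_of_nonneg_of_nonpos (hγ k).le
        simp [sub_nonpos]
        exact (hmono hmem1 hmem2 h).le
      exact mul_nonneg_iff.mpr (Or.inr ⟨this, hv0⟩)
    · simp [hv, h]
    · have : 0 ≤ (η - ηs) k := by simp [sub_nonneg, h.le]
      have hv0 : 0 ≤ v k := by
        apply mul_nonneg (hγ k).le
        simp [sub_nonneg]
        exact (hmono hmem2 hmem1 h).le
      exact mul_nonneg this hv0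
  have hall : ∀ k ∈ Finset.univ, (η - ηs) k * v k = 0 := by
    have := (Finset.sum_eq_zero_iff_of_nonneg (fun k _ => hterm k)).mp key
    exact this
  funext k
  have hk := hall k (Finset.mem_univ k)
  by_contra hne
  rcases mul_eq_zero.mp hk with h | h
  · exact hne (by linarith [sub_eq_zero.mp (by simpa using h)])
  · have hk1 := hηbox k
    have hk2 := hηsbox k
    have hsin : Real.sin (η k) = Real.sin (ηs k) := by
      have hγk := (hγ k).ne'
      rcases mul_eq_zero.mp h with h' | h'
      · exact absurd h' hγk
      · linarith
    exact hne (Real.injOn_sin ⟨hk1.1.le, hk1.2.le⟩ ⟨hk2.1.le, hk2.2.le⟩ hsin)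
end

section
/- Consider the closed-loop network η̇ = Bᵀω, J ω̇ = [ω]⁻¹(Q⁻¹ξ − P_ℓ − BΓ sin η) − D(ω − 𝟙ω*), ξ̇ = −𝓛ξ − Q⁻¹[ω]⁻¹(ω − 𝟙ω*), with B the incidence matrix of a connected physical graph, 𝓛 the Laplacian of a connected undirected communication graph, J, D, Q, Γ diagonal positive, and ω restricted to ℝ_{>0}ⁿ. Then (η̄, ω̄, ξ̄) is an equilibrium if and only if ω̄ = 𝟙ω*, ξ̄ = 𝟙(𝟙ᵀP_ℓ)/(𝟙ᵀQ⁻¹𝟙), and Q⁻¹ξ̄ − P_ℓ − BΓ sin η̄ = 0. -/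
lemma sumL {n : ℕ} (L : Matrix (Fin n) (Fin n) ℝ) (hLsym : L.IsSymm)
    (hL1 : L.mulVec (fun _ => 1) = 0) (ξ : Fin n → ℝ) :
    ∑ i, (L.mulVec ξ) i = 0 := by
  have hcol : ∀ j, ∑ i, L i j = 0 := by
    intro j
    have := congrFun hL1 j
    simp [Matrix.mulVec, dotProduct] at this
    calc ∑ i, L i j = ∑ i, L j i := by
          refine Finset.sum_congr rfl fun i _ => ?_
          rw [← hLsym.apply i j]
      _ = 0 := this
  simp only [Matrix.mulVec, dotProduct]
  rw [Finset.sum_comm]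
  simp_rw [← Finset.sum_mul]
  simp [hcol]

lemma sumB {n m : ℕ} (B : Matrix (Fin n) (Fin m) ℝ) (hB1 : ∀ e, ∑ i, B i e = 0)
    (v : Fin m → ℝ) : ∑ i, (B.mulVec v) i = 0 := by
  simp only [Matrix.mulVec, dotProduct]
  rw [Finset.sum_comm]
  simp_rw [← Finset.sum_mul]
  simp [hB1]

/-- (η̄, ω̄, ξ̄) (with ω̄ ∈ ℝ_{>0}ⁿ) is an equilibrium of the closed-loop network
η̇ = Bᵀω, J ω̇ = [ω]⁻¹(Q⁻¹ξ − Pℓ − BΓ sin η) − D(ω − 𝟙ω*), ξ̇ = −𝓛ξ − Q⁻¹[ω]⁻¹(ω − 𝟙ω*)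
iff ω̄ = 𝟙ω*, ξ̄ = 𝟙(𝟙ᵀPℓ)/(𝟙ᵀQ⁻¹𝟙), and Q⁻¹ξ̄ − Pℓ − BΓ sin η̄ = 0. -/
theorem stmt11 {n m : ℕ} (hn : 0 < n)
    (B : Matrix (Fin n) (Fin m) ℝ) (hB1 : ∀ e, ∑ i, B i e = 0)
    (hBker : ∀ v : Fin n → ℝ, (∀ e, (B.transpose.mulVec v) e = 0) → ∃ c, v = fun _ => c)
    (L : Matrix (Fin n) (Fin n) ℝ) (hLsym : L.IsSymm)
    (hL1 : L.mulVec (fun _ => 1) = 0)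
    (hLker : ∀ v : Fin n → ℝ, L.mulVec v = 0 → ∃ c, v = fun _ => c)
    (Jm Dm q : Fin n → ℝ) (γ : Fin m → ℝ)
    (hJ : ∀ i, 0 < Jm i) (hD : ∀ i, 0 < Dm i) (hq : ∀ i, 0 < q i) (hγ : ∀ k, 0 < γ k)
    (Pl : Fin n → ℝ) (ωstar : ℝ) (hωstar : 0 < ωstar)
    (η : Fin m → ℝ) (ω ξ : Fin n → ℝ) (hωpos : ∀ i, 0 < ω i) :
    ((∀ e, (B.transpose.mulVec ω) e = 0) ∧
     (∀ i, ((q i)⁻¹ * ξ i - Pl i - (B.mulVec fun k => γ k * Real.sin (η k)) i) / ω i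
        - Dm i * (ω i - ωstar) = 0) ∧
     (∀ i, -(L.mulVec ξ) i - (q i)⁻¹ * (ω i - ωstar) / ω i = 0))
    ↔ ((ω = fun _ => ωstar) ∧
       (ξ = fun _ => (∑ i, Pl i) / (∑ i, (q i)⁻¹)) ∧
       (∀ i, (q i)⁻¹ * ξ i - Pl i - (B.mulVec fun k => γ k * Real.sin (η k)) i = 0)) := by
  have hqsum : 0 < ∑ i, (q i)⁻¹ :=
    Finset.sum_pos (fun i _ => inv_pos.mpr (hq i)) ⟨⟨0, hn⟩, Finset.mem_univ _⟩
  constructor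
  · rintro ⟨h1, h2, h3⟩
    -- ω is constant
    obtain ⟨c, hc⟩ := hBker ω h1
    have hcpos : 0 < c := by have := hωpos ⟨0, hn⟩; rw [hc] at this; exact this
    -- sum the third equation
    have hsum3 : ∑ i, ((q i)⁻¹ * (ω i - ωstar) / ω i) = 0 := by
      have heach : ∀ i, (q i)⁻¹ * (ω i - ωstar) / ω i = -((L.mulVec ξ) i) := by
        intro i; have := h3 i; linarith
      rw [Finset.sum_congr rfl fun i _ => heach i, Finset.sum_neg_distrib,
        sumL L hLsym hL1 ξ, neg_zero]
    have hcw : c = ωstar := by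
      rw [hc] at hsum3
      have hfac : ∑ x : Fin n, (q x)⁻¹ * (c - ωstar) / c
          = (∑ x, (q x)⁻¹) * ((c - ωstar) / c) := by
        rw [Finset.sum_mul]
        refine Finset.sum_congr rfl fun x _ => ?_; ring
      rw [hfac] at hsum3
      rcases mul_eq_zero.mp hsum3 with h | h
      · exact absurd h (ne_of_gt hqsum)
      · rcases div_eq_zero_iff.mp h with h' | h'
        · linarith
        · exact absurd h' (ne_of_gt hcpos)
    have hω : ω = fun _ => ωstar := by rw [hc, hcw]
    -- third equation now gives L ξ = 0
    have hLξ : L.mulVec ξ = 0 := by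
      funext i
      have := h3 i
      rw [hω] at this
      simp at this
      simpa using this
    obtain ⟨d, hd⟩ := hLker ξ hLξ
    -- second equation gives numerator zero
    have h2' : ∀ i, (q i)⁻¹ * ξ i - Pl i - (B.mulVec fun k => γ k * Real.sin (η k)) i = 0 := by
      intro i
      have := h2 i
      rw [hω] at this
      simp at this
      rcases this with h | h
      · exact h
      · exact absurd h (ne_of_gt hωstar)
    -- sum to identify d
    have hsum2 : ∑ i, ((q i)⁻¹ * ξ i - Pl i - (B.mulVec fun k => γ k * Real.sin (η k)) i) = 0 := by
      simp [h2']
    rw [Finset.sum_sub_distrib, Finset.sum_sub_distrib, sumB B hB1, sub_zero, hd] at hsum2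
    simp only [← Finset.sum_mul] at hsum2
    have hdval : d = (∑ i, Pl i) / (∑ i, (q i)⁻¹) := by
      rw [eq_div_iff (ne_of_gt hqsum)]
      linarith [hsum2]
    exact ⟨hω, by rw [hd, hdval], h2'⟩
  · rintro ⟨hω, hξ, h2'⟩
    refine ⟨?_, ?_, ?_⟩
    · intro e
      rw [hω]
      simp only [Matrix.mulVec, dotProduct, Matrix.transpose_apply]
      rw [← Finset.sum_mul, hB1 e, zero_mul]
    · intro i
      rw [hω, h2' i]
      simp
    · intro i
      rw [hω, hξ]
      have : L.mulVec (fun _ => (∑ i, Pl i) / (∑ i, (q i)⁻¹)) = 0 := by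
        have : (fun _ : Fin n => (∑ i, Pl i) / (∑ i, (q i)⁻¹))
            = ((∑ i, Pl i) / (∑ i, (q i)⁻¹)) • (fun _ : Fin n => (1:ℝ)) := by
          funext j; simp
        rw [this, Matrix.mulVec_smul, hL1, smul_zero]
      rw [this]
      simp
end

section
/- Along solutions of the shifted secondary-control system η̇ = Bᵀ(ω − 𝟙ω*), J ω̇ = [ω]⁻¹(Q⁻¹(ξ − ξ̄) − BΓ(sin η − sin η̄)) − D(ω − 𝟙ω*), ξ̇ = −𝓛(ξ − ξ̄) − Q⁻¹[ω]⁻¹(ω − 𝟙ω*), the time derivative of W_s(η, ω, ξ) = W(x) − (x − x̄)ᵀ∇W(x̄) − W(x̄), where W(x) = ½ωᵀJω − (ω*)⁻¹𝟙ᵀΓ cos η + ½ξᵀξ and x̄ = (η̄, 𝟙ω*, ξ̄), equals Ẇ_s = −(ξ − ξ̄)ᵀ𝓛(ξ − ξ̄) − (ω − 𝟙ω*)ᵀ(D − (ω*)⁻¹[ω]⁻¹[z(η)])(ω − 𝟙ω*), with z(η) = BΓ(sin η − sin η̄). -/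
/-- Dissipation identity for the secondary-control closed loop: along solutions
of the shifted system, d/dt W_s = −(ξ − ξ̄)ᵀ𝓛(ξ − ξ̄)
− (ω − 𝟙ω*)ᵀ(D − (ω*)⁻¹[ω]⁻¹[z(η)])(ω − 𝟙ω*), with z(η) = BΓ(sin η − sin η̄),
where W_s is the Bregman shift of W(x) = ½ωᵀJω − (ω*)⁻¹𝟙ᵀΓ cos η + ½ξᵀξ at
x̄ = (η̄, 𝟙ω*, ξ̄). The state is encoded as x : (Fin m ⊕ Fin n ⊕ Fin n) → ℝ with
η = x ∘ inl, ω = x ∘ inr ∘ inl, ξ = x ∘ inr ∘ inr. -/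
theorem stmt13 {n m : ℕ}
    (B : Matrix (Fin n) (Fin m) ℝ)
    (L : Matrix (Fin n) (Fin n) ℝ) (hLsym : L.IsSymm) (hLpsd : L.PosSemidef)
    (Jm Dm q : Fin n → ℝ) (γ : Fin m → ℝ)
    (hJ : ∀ i, 0 < Jm i) (hD : ∀ i, 0 < Dm i) (hq : ∀ i, 0 < q i) (hγ : ∀ k, 0 < γ k)
    (ωstar : ℝ) (hωstar : 0 < ωstar)
    (ηbar : Fin m → ℝ) (ξbar : Fin n → ℝ)
    (W : ((Fin m ⊕ Fin n ⊕ Fin n) → ℝ) → ℝ)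
    (hW : ∀ x, W x = (1 / 2) * ∑ i, Jm i * (x (Sum.inr (Sum.inl i))) ^ 2
        - ωstar⁻¹ * ∑ k, γ k * Real.cos (x (Sum.inl k))
        + (1 / 2) * ∑ i, (x (Sum.inr (Sum.inr i))) ^ 2)
    (xbar : (Fin m ⊕ Fin n ⊕ Fin n) → ℝ)
    (hxbar : xbar = Sum.elim ηbar (Sum.elim (fun _ => ωstar) ξbar))
    (Ws : ((Fin m ⊕ Fin n ⊕ Fin n) → ℝ) → ℝ)
    (hWs : ∀ x, Ws x =
      W x - (∑ a, (x a - xbar a) * fderiv ℝ W xbar (Pi.single a 1)) - W xbar)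
    (ηf : ℝ → Fin m → ℝ) (ωf ξf : ℝ → Fin n → ℝ) (t : ℝ)
    (hωpos : ∀ i, 0 < ωf t i)
    (z : Fin n → ℝ)
    (hz : z = B.mulVec fun k => γ k * (Real.sin (ηf t k) - Real.sin (ηbar k)))
    (hη : ∀ k, HasDerivAt (fun s => ηf s k)
        ((B.transpose.mulVec fun i => ωf t i - ωstar) k) t)
    (hω : ∀ i, HasDerivAt (fun s => ωf s i)
        ((((q i)⁻¹ * (ξf t i - ξbar i) - z i) / ωf t i
          - Dm i * (ωf t i - ωstar)) / Jm i) t)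
    (hξ : ∀ i, HasDerivAt (fun s => ξf s i)
        (-(L.mulVec fun j => ξf t j - ξbar j) i
          - (q i)⁻¹ * (ωf t i - ωstar) / ωf t i) t) :
    HasDerivAt (fun s => Ws (Sum.elim (ηf s) (Sum.elim (ωf s) (ξf s))))
      (-(∑ i, (ξf t i - ξbar i) * (L.mulVec fun j => ξf t j - ξbar j) i)
        - ∑ i, (ωf t i - ωstar) *
            ((Dm i - ωstar⁻¹ * (ωf t i)⁻¹ * z i) * (ωf t i - ωstar))) t := by
  classical
  -- the projection CLMs
  let P : (Fin m ⊕ Fin n ⊕ Fin n) → (((Fin m ⊕ Fin n ⊕ Fin n) → ℝ) →L[ℝ] ℝ) := fun a =>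
    ContinuousLinearMap.proj (R := ℝ) (φ := fun _ : Fin m ⊕ Fin n ⊕ Fin n => ℝ) a
  have hP : ∀ a (x0 : (Fin m ⊕ Fin n ⊕ Fin n) → ℝ),
      HasFDerivAt (fun x : (Fin m ⊕ Fin n ⊕ Fin n) → ℝ => x a) (P a) x0 := fun a x0 =>
    (ContinuousLinearMap.proj (R := ℝ) (φ := fun _ : Fin m ⊕ Fin n ⊕ Fin n => ℝ) a).hasFDerivAt
      (x := x0)
  -- the gradient of W at xbar
  let L₀ : ((Fin m ⊕ Fin n ⊕ Fin n) → ℝ) →L[ℝ] ℝ :=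
    (1/2 : ℝ) • (∑ i, (Jm i * (2 * xbar (Sum.inr (Sum.inl i)) ^ 1)) • P (Sum.inr (Sum.inl i)))
      - ωstar⁻¹ • (∑ k, (γ k * (-Real.sin (xbar (Sum.inl k)))) • P (Sum.inl k))
      + (1/2 : ℝ) • (∑ i, (2 * xbar (Sum.inr (Sum.inr i)) ^ 1) • P (Sum.inr (Sum.inr i)))
  have hWF : HasFDerivAt W L₀ xbar := by
    have hWfun : W = fun x => (1 / 2) * ∑ i, Jm i * (x (Sum.inr (Sum.inl i))) ^ 2
        - ωstar⁻¹ * ∑ k, γ k * Real.cos (x (Sum.inl k))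
        + (1 / 2) * ∑ i, (x (Sum.inr (Sum.inr i))) ^ 2 := funext hW
    rw [hWfun]
    refine HasFDerivAt.add (HasFDerivAt.sub ?_ ?_) ?_
    · exact (HasFDerivAt.fun_sum fun i _ =>
        ((hasDerivAt_pow 2 (xbar (Sum.inr (Sum.inl i)))).const_mul (Jm i)).comp_hasFDerivAt
          xbar (hP _ xbar)).const_mul (1/2)
    · exact (HasFDerivAt.fun_sum fun k _ =>
        ((Real.hasDerivAt_cos (xbar (Sum.inl k))).const_mul (γ k)).comp_hasFDerivAt
          xbar (hP _ xbar)).const_mul ωstar⁻¹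
    · exact (HasFDerivAt.fun_sum fun i _ =>
        (hasDerivAt_pow 2 (xbar (Sum.inr (Sum.inr i)))).comp_hasFDerivAt
          xbar (hP _ xbar)).const_mul (1/2)
  have hgrad : ∀ a, fderiv ℝ W xbar (Pi.single a 1)
      = Sum.elim (fun k => ωstar⁻¹ * γ k * Real.sin (ηbar k))
          (Sum.elim (fun i => Jm i * ωstar) ξbar) a := by
    intro a
    rw [hWF.fderiv]
    simp only [L₀, P, ContinuousLinearMap.add_apply, ContinuousLinearMap.sub_apply,
      ContinuousLinearMap.smul_apply, ContinuousLinearMap.sum_apply,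
      ContinuousLinearMap.proj_apply, smul_eq_mul, Pi.single_apply, hxbar]
    rcases a with k | (i | i) <;>
      simp [Finset.sum_ite_eq', Finset.sum_ite_eq, hxbar] <;> ring
  -- rewrite the function of s
  have hFun : (fun s => Ws (Sum.elim (ηf s) (Sum.elim (ωf s) (ξf s)))) = fun s =>
      ((1/2) * ∑ i, Jm i * (ωf s i) ^ 2 - ωstar⁻¹ * ∑ k, γ k * Real.cos (ηf s k)
        + (1/2) * ∑ i, (ξf s i) ^ 2)
      - ((∑ k, (ηf s k - ηbar k) * (ωstar⁻¹ * γ k * Real.sin (ηbar k)))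
        + ((∑ i, (ωf s i - ωstar) * (Jm i * ωstar))
          + (∑ i, (ξf s i - ξbar i) * ξbar i)))
      - W xbar := by
    funext s
    rw [hWs, hW]
    simp only [Fintype.sum_sum_type, hgrad, Sum.elim_inl, Sum.elim_inr]
    simp only [hxbar, Sum.elim_inl, Sum.elim_inr]
  rw [hFun]
  -- the derivative via combinators
  have h1 : HasDerivAt (fun s => (1/2 : ℝ) * ∑ i, Jm i * (ωf s i) ^ 2)
      ((1/2 : ℝ) * ∑ i, Jm i * ((2:ℕ) * ωf t i ^ 1 *
        ((((q i)⁻¹ * (ξf t i - ξbar i) - z i) / ωf t i - Dm i * (ωf t i - ωstar)) / Jm i))) t :=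
    HasDerivAt.const_mul _ (HasDerivAt.fun_sum fun i _ => ((hω i).pow 2).const_mul (Jm i))
  have h2 : HasDerivAt (fun s => ωstar⁻¹ * ∑ k, γ k * Real.cos (ηf s k))
      (ωstar⁻¹ * ∑ k, γ k * (-Real.sin (ηf t k) *
        ((B.transpose.mulVec fun i => ωf t i - ωstar) k))) t :=
    HasDerivAt.const_mul _ (HasDerivAt.fun_sum fun k _ => ((hη k).cos).const_mul (γ k))
  have h3 : HasDerivAt (fun s => (1/2 : ℝ) * ∑ i, (ξf s i) ^ 2)
      ((1/2 : ℝ) * ∑ i, (2:ℕ) * ξf t i ^ 1 *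
        (-(L.mulVec fun j => ξf t j - ξbar j) i - (q i)⁻¹ * (ωf t i - ωstar) / ωf t i)) t :=
    HasDerivAt.const_mul _ (HasDerivAt.fun_sum fun i _ => (hξ i).pow 2)
  have h4 : HasDerivAt (fun s => ∑ k, (ηf s k - ηbar k) * (ωstar⁻¹ * γ k * Real.sin (ηbar k)))
      (∑ k, ((B.transpose.mulVec fun i => ωf t i - ωstar) k) *
        (ωstar⁻¹ * γ k * Real.sin (ηbar k))) t :=
    HasDerivAt.fun_sum fun k _ => ((hη k).sub_const (ηbar k)).mul_const _
  have h5 : HasDerivAt (fun s => ∑ i, (ωf s i - ωstar) * (Jm i * ωstar))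
      (∑ i, ((((q i)⁻¹ * (ξf t i - ξbar i) - z i) / ωf t i - Dm i * (ωf t i - ωstar)) / Jm i)
        * (Jm i * ωstar)) t :=
    HasDerivAt.fun_sum fun i _ => ((hω i).sub_const ωstar).mul_const _
  have h6 : HasDerivAt (fun s => ∑ i, (ξf s i - ξbar i) * ξbar i)
      (∑ i, (-(L.mulVec fun j => ξf t j - ξbar j) i - (q i)⁻¹ * (ωf t i - ωstar) / ωf t i)
        * ξbar i) t :=
    HasDerivAt.fun_sum fun i _ => ((hξ i).sub_const (ξbar i)).mul_const _
  have hbig := (((h1.sub h2).add h3).sub (h4.add (h5.add h6))).sub_const (W xbar)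
  refine HasDerivAt.congr_deriv hbig (Eq.symm ?_)
  -- now the algebraic identity between the two derivative expressions
  have hcore : ∑ k, γ k * (Real.sin (ηf t k) - Real.sin (ηbar k)) *
        ((B.transpose.mulVec fun i => ωf t i - ωstar) k)
      = ∑ i, (ωf t i - ωstar) * z i := by
    rw [hz]
    simp only [Matrix.mulVec, dotProduct, Matrix.transpose_apply, Finset.mul_sum,
      Finset.sum_mul]
    rw [Finset.sum_comm]
    exact Finset.sum_congr rfl fun i _ => Finset.sum_congr rfl fun k _ => by ring
  have hswap : ωstar⁻¹ * (∑ k, γ k * (-Real.sin (ηf t k) *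
        ((B.transpose.mulVec fun i => ωf t i - ωstar) k)))
      + ∑ k, ((B.transpose.mulVec fun i => ωf t i - ωstar) k) *
        (ωstar⁻¹ * γ k * Real.sin (ηbar k))
      = -(ωstar⁻¹ * ∑ i, (ωf t i - ωstar) * z i) := by
    rw [← hcore, Finset.mul_sum, Finset.mul_sum, ← Finset.sum_add_distrib,
      ← Finset.sum_neg_distrib]
    exact Finset.sum_congr rfl fun k _ => by ring
  have key : ∀ S2 S4 : ℝ, S2 + S4 = -(ωstar⁻¹ * ∑ i, (ωf t i - ωstar) * z i) →
      ∀ S1 S3 S5 S6 T : ℝ,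
      T = S1 + S3 - S5 - S6 + ωstar⁻¹ * ∑ i, (ωf t i - ωstar) * z i →
      T = S1 - S2 + S3 - (S4 + (S5 + S6)) := by
    intro S2 S4 h24 S1 S3 S5 S6 T hT
    rw [hT]; linarith
  refine key _ _ hswap _ _ _ _ _ ?_
  simp only [Finset.mul_sum, ← Finset.sum_sub_distrib, ← Finset.sum_add_distrib,
    ← Finset.sum_neg_distrib, neg_sub]
  refine Finset.sum_congr rfl fun i _ => ?_
  have hωne : ωf t i ≠ 0 := (hωpos i).ne'
  have hJne : Jm i ≠ 0 := (hJ i).ne'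
  have hωsne : ωstar ≠ 0 := hωstar.ne'
  have hqne : q i ≠ 0 := (hq i).ne'
  field_simp
  ring
end

section
/- Consider the scalar closed-loop system J ω̇ = −D(ω − ω*) + (χ − P_ℓ)/ω, χ̇ = −(ω − ω*)/ω on ω > 0, with J, D, ω* > 0 and P_ℓ ∈ ℝ. Its unique equilibrium is (ω, χ) = (ω*, P_ℓ), and the linearization at this equilibrium has a Hurwitz system matrix, so the equilibrium is locally asymptotically stable. -/
lemma quad_root_neg_re (p q : ℝ) (hp : 0 < p) (hq : 0 < q) (μ : ℂ)
    (h : μ^2 + (p:ℂ)*μ + (q:ℂ) = 0) : μ.re < 0 := by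
  have hre : μ.re^2 - μ.im^2 + p*μ.re + q = 0 := by
    have := congrArg Complex.re h
    simpa [Complex.ext_iff, pow_two, Complex.add_re, Complex.mul_re, Complex.mul_im] using this
  have him : μ.im * (2*μ.re + p) = 0 := by
    have := congrArg Complex.im h
    simp [pow_two, Complex.add_im, Complex.mul_im, Complex.mul_re] at this
    nlinarith [this]
  rcases mul_eq_zero.mp him with h0 | h0
  · nlinarith
  · linarith

/-- The scalar secondary-control closed loop J ω̇ = −D(ω − ω*) + (χ − Pℓ)/ω,
χ̇ = −(ω − ω*)/ω on ω > 0 has unique equilibrium (ω*, Pℓ), and the linearization there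
(the Jacobian matrix A) is Hurwitz (all eigenvalues have negative real part), so the
equilibrium is locally asymptotically stable. -/
theorem stmt17 (J D ωstar Pl : ℝ) (hJ : 0 < J) (hD : 0 < D) (hωstar : 0 < ωstar)
    (f1 f2 : ℝ → ℝ → ℝ)
    (hf1 : ∀ ω χ, f1 ω χ = (-D * (ω - ωstar) + (χ - Pl) / ω) / J)
    (hf2 : ∀ ω χ, f2 ω χ = -(ω - ωstar) / ω)
    (A : Matrix (Fin 2) (Fin 2) ℝ)
    (hA : A = !![deriv (fun ω => f1 ω Pl) ωstar, deriv (fun χ => f1 ωstar χ) Pl;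
                 deriv (fun ω => f2 ω Pl) ωstar, deriv (fun χ => f2 ωstar χ) Pl]) :
    {p : ℝ × ℝ | 0 < p.1 ∧ f1 p.1 p.2 = 0 ∧ f2 p.1 p.2 = 0} = {(ωstar, Pl)} ∧
    ∀ μ ∈ spectrum ℂ (A.map Complex.ofReal), μ.re < 0 := by
  have hJ' := hJ.ne'
  have hω' := hωstar.ne'
  constructor
  · ext ⟨ω, χ⟩
    simp only [Set.mem_setOf_eq, Set.mem_singleton_iff, Prod.mk.injEq]
    constructor
    · rintro ⟨hω, h1, h2⟩
      rw [hf2] at h2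
      have hωe : ω = ωstar := by
        field_simp at h2; linarith
      subst hωe
      rw [hf1] at h1
      have : χ = Pl := by field_simp at h1; linarith
      exact ⟨rfl, this⟩
    · rintro ⟨rfl, rfl⟩
      refine ⟨hωstar, ?_, ?_⟩ <;> simp [hf1, hf2]
  · -- compute derivatives
    have h1 : deriv (fun ω => f1 ω Pl) ωstar = -D/J := by
      have heq : (fun ω => f1 ω Pl) = fun ω => (-D/J) * ω + (D*ωstar/J) := by
        funext ω; rw [hf1]; simp [sub_self, zero_div]; ring
      rw [heq]
      have := (((hasDerivAt_id ωstar).const_mul (-D/J)).add_const (D*ωstar/J)).deriv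
      simpa using this
    have h2 : deriv (fun χ => f1 ωstar χ) Pl = 1/(ωstar*J) := by
      have heq : (fun χ => f1 ωstar χ) = fun χ => (1/(ωstar*J)) * χ + (-Pl/(ωstar*J)) := by
        funext χ; rw [hf1]; field_simp; ring
      rw [heq]
      have := (((hasDerivAt_id Pl).const_mul (1/(ωstar*J))).add_const (-Pl/(ωstar*J))).deriv
      simpa using this
    have h3 : deriv (fun ω => f2 ω Pl) ωstar = -1/ωstar := by
      have hd : HasDerivAt (fun ω : ℝ => -(ω - ωstar)/ω)
          ((-1 * ωstar - (-(ωstar - ωstar)) * 1)/ωstar^2) ωstar := by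
        exact (((hasDerivAt_id ωstar).sub_const ωstar).neg).div (hasDerivAt_id ωstar) hω'
      have heq : (fun ω => f2 ω Pl) = fun ω : ℝ => -(ω - ωstar)/ω := by
        funext ω; rw [hf2]
      rw [heq, hd.deriv]
      field_simp
      ring
    have h4 : deriv (fun χ => f2 ωstar χ) Pl = 0 := by
      have heq : (fun χ => f2 ωstar χ) = fun _ => -(ωstar - ωstar)/ωstar := by
        funext χ; rw [hf2]
      rw [heq, deriv_const]
    subst hA
    rw [h1, h2, h3, h4]
    intro μ hμ
    rw [spectrum.mem_iff] at hμ
    rw [Matrix.isUnit_iff_isUnit_det] at hμ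
    have hdet : ((algebraMap ℂ (Matrix (Fin 2) (Fin 2) ℂ) μ) -
        (!![(-D/J : ℝ), 1/(ωstar*J); -1/ωstar, 0]).map Complex.ofReal).det = 0 := by
      by_contra h
      exact hμ (isUnit_iff_ne_zero.mpr h)
    rw [Matrix.det_fin_two] at hdet
    simp [Matrix.algebraMap_matrix_apply, Matrix.map_apply] at hdet
    -- hdet should be an equation in μ
    have hquad : μ^2 + ((D/J : ℝ):ℂ)*μ + ((1/(ωstar^2*J) : ℝ):ℂ) = 0 := by
      push_cast
      field_simp at hdet ⊢
      ring_nf at hdet ⊢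
      linear_combination hdet
    exact quad_root_neg_re (D/J) (1/(ωstar^2*J)) (by positivity) (by positivity) μ hquad
end
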